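/- (Motzkin) Let n ≥ 4 and let P₁,…,Pₙ be n distinct points in ℝ³, not all lying in a single plane. Then the number of planes determined by the points, i.e. |𝓕₃|, is at least n. -/

import Mathlib

open AffineSubspace Module Finset

noncomputable section
namespace MotzkinAux

abbrev V3 := Fin 3 → ℝ


open Finset

lemma dbe_count {α β : Type*} (X : Finset α) (Y : Finset β)
    (Inc : α → β → Prop) [∀ x y, Decidable (Inc x y)]
    (hX : X.Nonempty)
    (h1 : ∀ x ∈ X, ∀ y ∈ Y, ¬ Inc x y →
      (X.filter fun x' => Inc x' y).card ≤ (Y.filter fun y' => Inc x y').card)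
    (h2 : ∀ x ∈ X, (Y.filter fun y' => Inc x y').Nonempty)
    (h3 : ∀ x ∈ X, (Y.filter fun y' => ¬ Inc x y').Nonempty)
    (h4 : ∀ y ∈ Y, (X.filter fun x' => ¬ Inc x' y).Nonempty) :
    X.card ≤ Y.card := by
  by_contra hlt
  push_neg at hlt
  set N : ℚ := (X.card : ℚ) with hN
  set M : ℚ := (Y.card : ℚ) with hM
  have hN0 : 0 < N := by rw [hN]; exact_mod_cast Finset.card_pos.mpr hX
  have hMN : M < N := by rw [hN, hM]; exact_mod_cast hlt
  set Z : Finset (α × β) := (X ×ˢ Y).filter (fun z => ¬ Inc z.1 z.2) with hZ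
  have hZne : Z.Nonempty := by
    obtain ⟨x, hx⟩ := hX
    obtain ⟨y, hy⟩ := h3 x hx
    rw [Finset.mem_filter] at hy
    exact ⟨(x, y), by simp [hZ, Finset.mem_filter, Finset.mem_product, hx, hy.1, hy.2]⟩
  have hrepr : ∀ g : α → β → ℚ, ∑ z ∈ Z, g z.1 z.2
      = ∑ x ∈ X, ∑ y ∈ Y.filter (fun y => ¬ Inc x y), g x y := by
    intro g
    rw [hZ, Finset.sum_filter, Finset.sum_product]
    simp [Finset.sum_filter]
  have hrepr2 : ∀ g : α → β → ℚ, ∑ z ∈ Z, g z.1 z.2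
      = ∑ y ∈ Y, ∑ x ∈ X.filter (fun x => ¬ Inc x y), g x y := by
    intro g
    rw [hZ, Finset.sum_filter, Finset.sum_product]
    simp only [Finset.sum_filter]
    exact Finset.sum_comm
  -- r' and k'
  set r : α → ℚ := fun x => ((Y.filter fun y' => Inc x y').card : ℚ) with hr
  set r' : α → ℚ := fun x => ((Y.filter fun y' => ¬ Inc x y').card : ℚ) with hr'
  set k : β → ℚ := fun y => ((X.filter fun x' => Inc x' y).card : ℚ) with hk
  set k' : β → ℚ := fun y => ((X.filter fun x' => ¬ Inc x' y).card : ℚ) with hk'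
  have hrM : ∀ x, r x + r' x = M := by
    intro x
    simp only [hr, hr', hM]
    exact_mod_cast Finset.card_filter_add_card_filter_not (fun y' => Inc x y')
  have hkN : ∀ y, k y + k' y = N := by
    intro y
    simp only [hk, hk', hN]
    exact_mod_cast Finset.card_filter_add_card_filter_not (fun x' => Inc x' y)
  have hr'pos : ∀ x ∈ X, 0 < r' x := by
    intro x hx
    simp only [hr']
    exact_mod_cast Finset.card_pos.mpr (h3 x hx)
  have hk'pos : ∀ y ∈ Y, 0 < k' y := by
    intro y hy
    simp only [hk']
    exact_mod_cast Finset.card_pos.mpr (h4 y hy)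
  have e1 : ∑ z ∈ Z, (1 / (N * r' z.1)) = 1 := by
    rw [hrepr (fun x _ => 1 / (N * r' x))]
    have : ∀ x ∈ X, ∑ _y ∈ Y.filter (fun y => ¬ Inc x y), (1 / (N * r' x)) = 1 / N := by
      intro x hx
      rw [Finset.sum_const, nsmul_eq_mul]
      have h0 : r' x ≠ 0 := ne_of_gt (hr'pos x hx)
      rw [hr']
      field_simp
    rw [Finset.sum_congr rfl this, Finset.sum_const, nsmul_eq_mul]
    rw [← hN]
    field_simp
  have e2 : ∑ z ∈ Z, (1 / (M * k' z.2)) = 1 := by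
    rw [hrepr2 (fun _ y => 1 / (M * k' y))]
    have hM0 : 0 < M := by
      obtain ⟨⟨x, y⟩, hz⟩ := hZne
      rw [hZ, Finset.mem_filter, Finset.mem_product] at hz
      rw [hM]
      exact_mod_cast Finset.card_pos.mpr ⟨y, hz.1.2⟩
    have : ∀ y ∈ Y, ∑ _x ∈ X.filter (fun x => ¬ Inc x y), (1 / (M * k' y)) = 1 / M := by
      intro y hy
      rw [Finset.sum_const, nsmul_eq_mul]
      have h0 : k' y ≠ 0 := ne_of_gt (hk'pos y hy)
      rw [hk']
      field_simp
    rw [Finset.sum_congr rfl this, Finset.sum_const, nsmul_eq_mul]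
    rw [← hM]
    field_simp
  have key : ∀ z ∈ Z, (1 / (M * k' z.2)) < (1 / (N * r' z.1)) := by
    rintro ⟨x, y⟩ hz
    rw [hZ, Finset.mem_filter, Finset.mem_product] at hz
    obtain ⟨⟨hx, hy⟩, hni⟩ := hz
    have hkr : k y ≤ r x := by
      simp only [hk, hr]
      exact_mod_cast h1 x hx y hy hni
    have hrpos : 0 < r x := by
      simp only [hr]
      exact_mod_cast Finset.card_pos.mpr (h2 x hx)
    have hk0 : 0 ≤ k y := by simp only [hk]; positivity
    have hlhs : 0 < N * r' x := mul_pos hN0 (hr'pos x hx)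
    apply one_div_lt_one_div_of_lt hlhs
    have : M * k y < N * r x := by
      calc M * k y ≤ M * r x := by
            apply mul_le_mul_of_nonneg_left hkr
            rw [hM]; positivity
        _ < N * r x := by exact mul_lt_mul_of_pos_right hMN hrpos
    nlinarith [hrM x, hkN y]
  have : (1 : ℚ) < 1 := by
    calc (1 : ℚ) = ∑ z ∈ Z, (1 / (M * k' z.2)) := e2.symm
      _ < ∑ z ∈ Z, (1 / (N * r' z.1)) := Finset.sum_lt_sum_of_nonempty hZne key
      _ = 1 := e1
  exact absurd this (lt_irrefl 1)





-- L1
lemma flat_eq_of_le {W₁ W₂ : AffineSubspace ℝ V3} (hle : W₁ ≤ W₂)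
    (hne : (W₁ : Set V3).Nonempty)
    (hr : finrank ℝ W₂.direction ≤ finrank ℝ W₁.direction) : W₁ = W₂ := by
  have hd : W₁.direction = W₂.direction :=
    Submodule.eq_of_le_of_finrank_le (AffineSubspace.direction_le hle) hr
  apply AffineSubspace.ext_of_direction_eq hd
  obtain ⟨p, hp⟩ := hne
  exact ⟨p, hp, hle hp⟩

-- range of a triple
lemma range_triple (a b c : V3) : Set.range ![a, b, c] = {a, b, c} := by
  ext x
  simp [Fin.exists_fin_two, Fin.exists_fin_succ]
  tauto

-- L2 triple
lemma finrank_direction_triple {a b c : V3} (h : ¬ Collinear ℝ ({a, b, c} : Set V3)) :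
    finrank ℝ (affineSpan ℝ ({a, b, c} : Set V3)).direction = 2 := by
  rw [direction_affineSpan]
  have hai : AffineIndependent ℝ ![a, b, c] := affineIndependent_iff_not_collinear_set.mpr h
  have := hai.finrank_vectorSpan (by simp : Fintype.card (Fin 3) = 2 + 1)
  rwa [range_triple] at this

-- L2 pair
lemma finrank_direction_pair {a b : V3} (h : a ≠ b) :
    finrank ℝ (affineSpan ℝ ({a, b} : Set V3)).direction = 1 := by
  rw [direction_affineSpan, vectorSpan_pair]
  exact finrank_span_singleton (by simpa [sub_eq_zero] using h)

-- L8 : subset of a line is collinear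
lemma collinear_of_subset_span_pair {s : Set V3} {a b : V3}
    (h : s ⊆ (affineSpan ℝ ({a, b} : Set V3) : Set V3)) : Collinear ℝ s := by
  have h1 : vectorSpan ℝ s ≤ vectorSpan ℝ (affineSpan ℝ ({a, b} : Set V3) : Set V3) :=
    vectorSpan_mono ℝ h
  have h2 : vectorSpan ℝ (affineSpan ℝ ({a, b} : Set V3) : Set V3)
      = vectorSpan ℝ ({a, b} : Set V3) := by
    conv_lhs => rw [← direction_affineSpan ℝ, affineSpan_coe, direction_affineSpan]
  rw [h2] at h1
  have := collinear_pair ℝ a b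
  rw [collinear_iff_rank_le_one] at this ⊢
  exact le_trans (Submodule.rank_mono h1) this

-- L7 : noncollinear triple through a given point
lemma exists_noncollinear_with {s : Set V3} (hs : ¬ Collinear ℝ s) (x : V3) :
    ∃ q ∈ s, ∃ r ∈ s, ¬ Collinear ℝ ({x, q, r} : Set V3) := by
  by_contra hcon
  push_neg at hcon
  apply hs
  by_cases hsing : s ⊆ {x}
  · exact (collinear_singleton ℝ x).subset hsing
  · obtain ⟨q, hq, hqx⟩ : ∃ q ∈ s, q ≠ x := by
      by_contra h
      push_neg at h
      exact hsing fun y hy => h y hy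
    apply collinear_of_subset_span_pair (a := x) (b := q)
    intro r hr
    have hcol : Collinear ℝ ({x, q, r} : Set V3) := hcon q hq r hr
    exact hcol.mem_affineSpan_of_mem_of_ne (Set.mem_insert _ _)
      (Set.mem_insert_of_mem _ (Set.mem_insert _ _))
      (Set.mem_insert_of_mem _ (Set.mem_insert_of_mem _ rfl)) (Ne.symm hqx)

-- L5 : noncollinear triple extraction
lemma exists_noncollinear_triple {s : Set V3} (hs : ¬ Collinear ℝ s) :
    ∃ a ∈ s, ∃ b ∈ s, ∃ c ∈ s, ¬ Collinear ℝ ({a, b, c} : Set V3) := by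
  have hne : s.Nonempty := by
    rcases s.eq_empty_or_nonempty with rfl | h
    · exact absurd (collinear_empty ℝ _) hs
    · exact h
  obtain ⟨a, ha⟩ := hne
  obtain ⟨q, hq, r, hr, h⟩ := exists_noncollinear_with hs a
  exact ⟨a, ha, q, hq, r, hr, h⟩

-- L9 : coplanar from inside a plane
lemma coplanar_of_subset_plane {s : Set V3} {H : AffineSubspace ℝ V3}
    (hs : s ⊆ (H : Set V3)) (hH : finrank ℝ H.direction ≤ 2) : Coplanar ℝ s := by
  have h1 : vectorSpan ℝ s ≤ H.direction := by
    have := vectorSpan_mono ℝ hs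
    rwa [show vectorSpan ℝ (H : Set V3) = H.direction by
      conv_lhs => rw [← direction_affineSpan ℝ, affineSpan_coe]] at this
  unfold Coplanar
  have : Module.rank ℝ (vectorSpan ℝ s) ≤ Module.rank ℝ H.direction :=
    Submodule.rank_mono h1
  refine le_trans this ?_
  rw [← Module.finrank_eq_rank]
  exact_mod_cast hH

-- L10 : span of insert over a span
lemma affineSpan_insert_coe (x : V3) (s : Set V3) :
    affineSpan ℝ (insert x (affineSpan ℝ s : Set V3)) = affineSpan ℝ (insert x s) := by
  apply le_antisymm
  · rw [affineSpan_le]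
    apply Set.insert_subset
    · exact subset_affineSpan ℝ _ (Set.mem_insert _ _)
    · have : affineSpan ℝ s ≤ affineSpan ℝ (insert x s) :=
        affineSpan_mono ℝ (Set.subset_insert _ _)
      exact fun y hy => this hy
  · apply affineSpan_mono
    exact Set.insert_subset_insert (subset_affineSpan ℝ s)

-- L3 : flats from spans of subsets of the point set
lemma isFlatOf_span {n : ℕ} (P : Fin n → V3) {t : Set V3}
    (ht : t ⊆ Set.range P) (hne : t.Nonempty) :
    (affineSpan ℝ t : Set V3).Nonempty ∧
      affineSpan ℝ t = affineSpan ℝ (Set.range P ∩ (affineSpan ℝ t : Set V3)) := by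
  constructor
  · exact (affineSpan_nonempty ℝ).mpr hne
  · apply le_antisymm
    · exact affineSpan_mono ℝ (Set.subset_inter ht (subset_affineSpan ℝ t))
    · rw [affineSpan_le]
      exact Set.inter_subset_right






lemma mem_span_iff_vsub {s : Set V3} {a x : V3} (ha : a ∈ s) :
    x ∈ affineSpan ℝ s ↔ x - a ∈ vectorSpan ℝ s := by
  rw [← direction_affineSpan, ← vsub_eq_sub]
  exact (AffineSubspace.vsub_right_mem_direction_iff_mem (subset_affineSpan ℝ s ha) x).symm

lemma vectorSpan_triple (a b c : V3) :
    vectorSpan ℝ ({a, b, c} : Set V3) = Submodule.span ℝ {b - a, c - a} := by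
  rw [vectorSpan_eq_span_vsub_set_right ℝ (Set.mem_insert a {b, c})]
  have himg : ((· -ᵥ a) '' ({a, b, c} : Set V3)) = insert 0 {b - a, c - a} := by
    simp [Set.image_insert_eq, vsub_eq_sub, sub_self]
  rw [himg, Submodule.span_insert_zero]

lemma vectorSpan_pair' (a b : V3) :
    vectorSpan ℝ ({a, b} : Set V3) = Submodule.span ℝ {b - a} := by
  rw [vectorSpan_eq_span_vsub_set_right ℝ (Set.mem_insert a {b})]
  have himg : ((· -ᵥ a) '' ({a, b} : Set V3)) = insert 0 {b - a} := by
    simp [Set.image_insert_eq, vsub_eq_sub, sub_self]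
  rw [himg, Submodule.span_insert_zero]

lemma mem_span_triple {p q r x : V3} :
    x ∈ affineSpan ℝ ({p, q, r} : Set V3) ↔ ∃ m n : ℝ, m • (q - p) + n • (r - p) = x - p := by
  rw [mem_span_iff_vsub (Set.mem_insert _ _), vectorSpan_triple, Submodule.mem_span_pair]

lemma mem_span_pair {p q x : V3} :
    x ∈ affineSpan ℝ ({p, q} : Set V3) ↔ ∃ m : ℝ, m • (q - p) = x - p := by
  rw [mem_span_iff_vsub (Set.mem_insert _ _), vectorSpan_pair']
  rw [show Submodule.span ℝ ({q - p} : Set V3) = Submodule.span ℝ {q - p} from rfl]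
  exact Submodule.mem_span_singleton

lemma triple_subset_comm (a b c : V3) : ({a, b, c} : Set V3) ⊆ ({c, a, b} : Set V3) := by
  intro y hy
  simp at hy ⊢
  tauto

lemma not_collinear_of_not_mem_pair {x a b : V3} (hab : a ≠ b)
    (hx : x ∉ affineSpan ℝ ({a, b} : Set V3)) : ¬ Collinear ℝ ({x, a, b} : Set V3) := by
  intro h
  exact hx (h.mem_affineSpan_of_mem_of_ne
    (Set.mem_insert_of_mem _ (Set.mem_insert _ _))
    (Set.mem_insert_of_mem _ (Set.mem_insert_of_mem _ rfl))
    (Set.mem_insert _ _) hab)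

lemma smul_rel_collinear {a b c : V3} {m t : ℝ} (ht : t ≠ 0)
    (heq : t • (c - a) = m • (b - a)) : Collinear ℝ ({a, b, c} : Set V3) := by
  have hc : c ∈ affineSpan ℝ ({a, b} : Set V3) := by
    rw [mem_span_pair]
    exact ⟨m / t, by
      rw [div_eq_inv_mul, ← smul_smul, ← heq, smul_smul, inv_mul_cancel₀ ht, one_smul]⟩
  have := collinear_insert_of_mem_affineSpan_pair hc
  exact this.subset (triple_subset_comm a b c)

/-- The main geometric lemma for `h3`: given a non-coplanar set and any point `x`,
there is a noncollinear triple in the set whose plane avoids `x`. -/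
lemma exists_plane_avoiding {s : Set V3} (hs : ¬ Coplanar ℝ s) (x : V3) :
    ∃ a ∈ s, ∃ b ∈ s, ∃ c ∈ s, ¬ Collinear ℝ ({a, b, c} : Set V3) ∧
      x ∉ affineSpan ℝ ({a, b, c} : Set V3) := by
  have hncol : ¬ Collinear ℝ s := fun h => hs h.coplanar
  obtain ⟨a, ha, b, hb, c, hc, habc⟩ : ∃ a ∈ s, ∃ b ∈ s, ∃ c ∈ s,
      ¬ Collinear ℝ ({a, b, c} : Set V3) := exists_noncollinear_triple hncol
  by_cases hx : x ∈ affineSpan ℝ ({a, b, c} : Set V3)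
  swap
  · exact ⟨a, ha, b, hb, c, hc, habc, hx⟩
  -- get r outside the plane
  obtain ⟨r, hr, hrPl⟩ : ∃ r ∈ s, r ∉ affineSpan ℝ ({a, b, c} : Set V3) := by
    by_contra hcon
    push_neg at hcon
    apply hs
    exact coplanar_of_subset_plane (fun y hy => hcon y hy)
      (le_of_eq (finrank_direction_triple habc))
  -- the three candidate planes
  have hu : b - a ≠ 0 := sub_ne_zero.mpr (Ne.symm (ne₁₂_of_not_collinear habc))
  have hv' : ∀ m t : ℝ, t ≠ 0 → t • (c - a) ≠ m • (b - a) := by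
    intro m t ht heq
    exact habc (smul_rel_collinear ht heq)
  have hw' : ∀ m n t : ℝ, t ≠ 0 → t • (r - a) ≠ m • (b - a) + n • (c - a) := by
    intro m n t ht heq
    apply hrPl
    rw [mem_span_triple]
    refine ⟨m / t, n / t, ?_⟩
    rw [div_eq_inv_mul, div_eq_inv_mul, ← smul_smul, ← smul_smul, ← smul_add, ← heq,
      smul_smul, inv_mul_cancel₀ ht, one_smul]
  -- noncollinearity of the three triples
  have hab : a ≠ b := ne₁₂_of_not_collinear habc
  have hac : a ≠ c := ne₁₃_of_not_collinear habc
  have h₁ : ¬ Collinear ℝ ({a, b, r} : Set V3) := by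
    intro h
    have hrmem : r ∈ affineSpan ℝ ({a, b} : Set V3) :=
      h.mem_affineSpan_of_mem_of_ne (Set.mem_insert _ _)
        (Set.mem_insert_of_mem _ (Set.mem_insert _ _))
        (Set.mem_insert_of_mem _ (Set.mem_insert_of_mem _ rfl)) hab
    rw [mem_span_pair] at hrmem
    obtain ⟨m, hm⟩ := hrmem
    exact hw' m 0 1 one_ne_zero (by rw [one_smul, ← hm]; module)
  have h₂ : ¬ Collinear ℝ ({a, c, r} : Set V3) := by
    intro h
    have hrmem : r ∈ affineSpan ℝ ({a, c} : Set V3) :=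
      h.mem_affineSpan_of_mem_of_ne (Set.mem_insert _ _)
        (Set.mem_insert_of_mem _ (Set.mem_insert _ _))
        (Set.mem_insert_of_mem _ (Set.mem_insert_of_mem _ rfl)) hac
    rw [mem_span_pair] at hrmem
    obtain ⟨m, hm⟩ := hrmem
    exact hw' 0 m 1 one_ne_zero (by rw [one_smul, ← hm]; module)
  have h₃ : ¬ Collinear ℝ ({b, c, r} : Set V3) := by
    intro h
    have hbc : b ≠ c := ne₂₃_of_not_collinear habc
    have hrmem : r ∈ affineSpan ℝ ({b, c} : Set V3) :=
      h.mem_affineSpan_of_mem_of_ne (Set.mem_insert _ _)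
        (Set.mem_insert_of_mem _ (Set.mem_insert _ _))
        (Set.mem_insert_of_mem _ (Set.mem_insert_of_mem _ rfl)) hbc
    rw [mem_span_pair] at hrmem
    obtain ⟨m, hm⟩ := hrmem
    -- r - b = m (c - b) ⇒ r - a = (1-m)(b-a) + m(c-a)
    exact hw' (1 - m) m 1 one_ne_zero (by rw [one_smul]; linear_combination (norm := module) -hm)
  -- now show x not in one of the three planes
  by_cases hx₁ : x ∈ affineSpan ℝ ({a, b, r} : Set V3)
  swap
  · exact ⟨a, ha, b, hb, r, hr, h₁, hx₁⟩
  by_cases hx₂ : x ∈ affineSpan ℝ ({a, c, r} : Set V3)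
  swap
  · exact ⟨a, ha, c, hc, r, hr, h₂, hx₂⟩
  by_cases hx₃ : x ∈ affineSpan ℝ ({b, c, r} : Set V3)
  swap
  · exact ⟨b, hb, c, hc, r, hr, h₃, hx₃⟩
  -- contradiction
  exfalso
  rw [mem_span_triple] at hx hx₁ hx₂ hx₃
  obtain ⟨β, γ, hβγ⟩ := hx
  obtain ⟨s₁, t₁, h1⟩ := hx₁
  obtain ⟨s₂, t₂, h2⟩ := hx₂
  obtain ⟨s₃, t₃, h3⟩ := hx₃
  -- from h1: t₁ • w = (β - s₁) • u + γ • v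
  have ht₁ : t₁ = 0 := by
    by_contra ht
    exact hw' (β - s₁) γ t₁ ht (by linear_combination (norm := module) h1 - hβγ)
  have hγ : γ = 0 := by
    by_contra hγ
    exact hv' (s₁ - β) γ hγ (by rw [ht₁] at h1; linear_combination (norm := module) hβγ - h1)
  have ht₂ : t₂ = 0 := by
    by_contra ht
    exact hw' β (-s₂) t₂ ht (by rw [hγ] at hβγ; linear_combination (norm := module) h2 - hβγ)
  have hs₂ : s₂ = 0 := by
    by_contra hs
    exact hv' β s₂ hs (by rw [hγ] at hβγ; rw [ht₂] at h2; linear_combination (norm := module) h2 - hβγ)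
  have hβ : β = 0 := by
    have : β • (b - a) = 0 := by
      rw [hγ] at hβγ; rw [ht₂, hs₂] at h2
      linear_combination (norm := module) hβγ - h2
    rcases smul_eq_zero.mp this with h | h
    · exact h
    · exact absurd h hu
  have hxa : x = a := by
    rw [hβ, hγ] at hβγ
    have : x - a = 0 := by linear_combination (norm := module) - hβγ
    rwa [sub_eq_zero] at this
  -- h3 : s₃ • (c - b) + t₃ • (r - b) = x - b = a - b
  rw [hxa] at h3
  have ht₃ : t₃ = 0 := by
    by_contra ht
    exact hw' (s₃ + t₃ - 1) (-s₃) t₃ ht (by linear_combination (norm := module) h3)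
  rw [ht₃] at h3
  have hs₃ : s₃ = 0 := by
    by_contra hs
    exact hv' (s₃ - 1) s₃ hs (by linear_combination (norm := module) h3)
  rw [hs₃] at h3
  apply hu
  have : a - b = 0 := by linear_combination (norm := module) - h3
  have : b - a = 0 := by linear_combination (norm := module) - this
  exact this


open scoped Classical in
/-- The lines determined by a finite point set. -/
def linesOf (T : Finset V3) : Finset (AffineSubspace ℝ V3) :=
  ((T ×ˢ T).filter fun z => z.1 ≠ z.2).image fun z => affineSpan ℝ {z.1, z.2}

lemma mem_linesOf {T : Finset V3} {L : AffineSubspace ℝ V3} :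
    L ∈ linesOf T ↔ ∃ a ∈ T, ∃ b ∈ T, a ≠ b ∧ L = affineSpan ℝ {a, b} := by
  classical
  constructor
  · intro h
    rw [linesOf, Finset.mem_image] at h
    obtain ⟨z, hz, h⟩ := h
    rw [Finset.mem_filter, Finset.mem_product] at hz
    exact ⟨z.1, hz.1.1, z.2, hz.1.2, hz.2, h.symm⟩
  · rintro ⟨a, ha, b, hb, hab, rfl⟩
    rw [linesOf, Finset.mem_image]
    refine ⟨(a, b), ?_, rfl⟩
    rw [Finset.mem_filter, Finset.mem_product]
    exact ⟨⟨ha, hb⟩, hab⟩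

lemma exists_ne_of_not_collinear {T : Finset V3} (hT : ¬ Collinear ℝ (T : Set V3))
    (x : V3) : ∃ q ∈ T, q ≠ x := by
  by_contra h
  push_neg at h
  exact hT (((collinear_singleton ℝ x).subset) (fun y hy => h y hy))

/-- de Bruijn–Erdős in the plane (in fact in space): a finite non-collinear point set
determines at least as many lines as points. -/
lemma dBE {T : Finset V3} (hT : ¬ Collinear ℝ (T : Set V3)) : T.card ≤ (linesOf T).card := by
  classical
  apply dbe_count T (linesOf T) (fun x L => x ∈ L)
  · -- nonempty
    rcases T.eq_empty_or_nonempty with rfl | h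
    · exact absurd (by simpa using collinear_empty ℝ V3) hT
    · exact h
  · -- h1 : injection points of L → lines through x
    intro x hx L hL hni
    apply Finset.card_le_card_of_injOn (fun q => affineSpan ℝ {x, q})
    · intro q hq
      rw [Finset.mem_coe, Finset.mem_filter] at hq ⊢
      obtain ⟨hqT, hqL⟩ := hq
      have hxq : x ≠ q := fun h => hni (h ▸ hqL)
      exact ⟨mem_linesOf.mpr ⟨x, hx, q, hqT, hxq, rfl⟩,
        subset_affineSpan ℝ _ (Set.mem_insert _ _)⟩
    · intro q hq q' hq' heq
      by_contra hne
      change affineSpan ℝ ({x, q} : Set V3) = affineSpan ℝ ({x, q'} : Set V3) at heq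
      simp only [Finset.coe_filter, Set.mem_setOf_eq] at hq hq'
      have hq'mem : q' ∈ affineSpan ℝ ({x, q} : Set V3) := by
        rw [heq]
        exact subset_affineSpan ℝ _ (Set.mem_insert_of_mem _ (Set.mem_singleton _))
      have hcol : Collinear ℝ ({q', x, q} : Set V3) :=
        collinear_insert_of_mem_affineSpan_pair hq'mem
      have hxmem : x ∈ affineSpan ℝ ({q, q'} : Set V3) :=
        hcol.mem_affineSpan_of_mem_of_ne
          (Set.mem_insert_of_mem _ (Set.mem_insert_of_mem _ rfl))
          (Set.mem_insert _ _)
          (Set.mem_insert_of_mem _ (Set.mem_insert _ _)) hne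
      have hsub : affineSpan ℝ ({q, q'} : Set V3) ≤ L := by
        rw [affineSpan_le]
        intro y hy
        rcases hy with rfl | hy
        · exact hq.2
        · rw [Set.mem_singleton_iff] at hy
          exact hy ▸ hq'.2
      exact hni (hsub hxmem)
  · -- h2 : each point on some line
    intro x hx
    obtain ⟨q, hq, hqx⟩ := exists_ne_of_not_collinear hT x
    refine ⟨affineSpan ℝ {x, q}, ?_⟩
    rw [Finset.mem_filter]
    exact ⟨mem_linesOf.mpr ⟨x, hx, q, hq, fun h => hqx h.symm, rfl⟩,
      subset_affineSpan ℝ _ (Set.mem_insert _ _)⟩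
  · -- h3 : some line avoids x
    intro x hx
    have key : ∃ q ∈ T, ∃ r ∈ T, q ≠ r ∧ x ∉ affineSpan ℝ ({q, r} : Set V3) := by
      by_contra hcon
      push_neg at hcon
      obtain ⟨q, hq, hqx⟩ := exists_ne_of_not_collinear hT x
      apply hT
      apply collinear_of_subset_span_pair (a := x) (b := q)
      intro r hr
      rcases eq_or_ne r x with rfl | hrx
      · exact subset_affineSpan ℝ _ (Set.mem_insert _ _)
      rcases eq_or_ne r q with rfl | hrq
      · exact subset_affineSpan ℝ _ (Set.mem_insert_of_mem _ rfl)
      have hxqr : x ∈ affineSpan ℝ ({q, r} : Set V3) := hcon q hq r hr (fun h => hrq h.symm)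
      have hcol : Collinear ℝ ({x, q, r} : Set V3) :=
        collinear_insert_of_mem_affineSpan_pair hxqr
      exact hcol.mem_affineSpan_of_mem_of_ne (Set.mem_insert _ _)
        (Set.mem_insert_of_mem _ (Set.mem_insert _ _))
        (Set.mem_insert_of_mem _ (Set.mem_insert_of_mem _ rfl)) (fun h => hqx h.symm)
    obtain ⟨q, hq, r, hr, hqr, hxnot⟩ := key
    refine ⟨affineSpan ℝ {q, r}, ?_⟩
    rw [Finset.mem_filter]
    exact ⟨mem_linesOf.mpr ⟨q, hq, r, hr, hqr, rfl⟩, hxnot⟩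
  · -- h4 : some point off each line
    intro L hL
    obtain ⟨a, _, b, _, hab, rfl⟩ := mem_linesOf.mp hL
    by_contra hcon
    push_neg at hcon
    simp only [Finset.not_nonempty_iff_eq_empty, Finset.filter_eq_empty_iff, not_not] at hcon
    apply hT
    apply collinear_of_subset_span_pair (a := a) (b := b)
    intro y hy
    exact hcon hy

end MotzkinAux

/-- `W` is a flat determined by the points `P 0, …, P (n-1)`: a nonempty affine subspace
that equals the affine span of the set of points `P i` lying in `W`. -/
def IsFlatOf {n d : ℕ} (P : Fin n → (Fin d → ℝ)) (W : AffineSubspace ℝ (Fin d → ℝ)) : Prop :=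
  (W : Set (Fin d → ℝ)).Nonempty ∧ W = affineSpan ℝ (Set.range P ∩ (W : Set (Fin d → ℝ)))

/-- The rank of a flat: its dimension plus one. -/
noncomputable def flatRank {d : ℕ} (W : AffineSubspace ℝ (Fin d → ℝ)) : ℕ :=
  Module.finrank ℝ W.direction + 1

open MotzkinAux

/-- Motzkin: `n ≥ 4` distinct points in 3-space, not all in one plane,
determine at least `n` planes. -/
theorem motzkin_planes {n : ℕ} (hn : 4 ≤ n) (P : Fin n → (Fin 3 → ℝ))
    (hP : Function.Injective P) (hplane : ¬ Coplanar ℝ (Set.range P)) :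
    n ≤ Nat.card {W : AffineSubspace ℝ (Fin 3 → ℝ) // IsFlatOf P W ∧ flatRank W = 3} := by
  classical
  set X : Finset (Fin 3 → ℝ) := Finset.image P Finset.univ with hXdef
  have hXmem : ∀ a, a ∈ X ↔ a ∈ Set.range P := by
    intro a
    rw [hXdef, Finset.mem_image]
    simp [Set.mem_range]
  have hXcard : X.card = n := by
    rw [hXdef, Finset.card_image_of_injective _ hP, Finset.card_univ, Fintype.card_fin]
  set PP : Finset (AffineSubspace ℝ (Fin 3 → ℝ)) :=
    ((X ×ˢ X ×ˢ X).filter fun z => ¬ Collinear ℝ ({z.1, z.2.1, z.2.2} : Set (Fin 3 → ℝ))).image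
      (fun z => affineSpan ℝ ({z.1, z.2.1, z.2.2} : Set (Fin 3 → ℝ))) with hPPdef
  have memPP : ∀ H : AffineSubspace ℝ (Fin 3 → ℝ), H ∈ PP ↔ ∃ a ∈ X, ∃ b ∈ X, ∃ c ∈ X,
      ¬ Collinear ℝ ({a, b, c} : Set (Fin 3 → ℝ)) ∧
        H = affineSpan ℝ ({a, b, c} : Set (Fin 3 → ℝ)) := by
    intro H
    rw [hPPdef, Finset.mem_image]
    constructor
    · rintro ⟨z, hz, h⟩
      rw [Finset.mem_filter, Finset.mem_product] at hz
      obtain ⟨⟨h1, h2⟩, h3⟩ := hz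
      rw [Finset.mem_product] at h2
      exact ⟨z.1, h1, z.2.1, h2.1, z.2.2, h2.2, h3, h.symm⟩
    · rintro ⟨a, ha, b, hb, c, hc, habc, rfl⟩
      refine ⟨(a, b, c), ?_, rfl⟩
      rw [Finset.mem_filter, Finset.mem_product, Finset.mem_product]
      exact ⟨⟨ha, hb, hc⟩, habc⟩
  have hprop : ∀ H ∈ PP, (IsFlatOf P H ∧ flatRank H = 3) ∧
      Module.finrank ℝ H.direction = 2 := by
    intro H hH
    obtain ⟨a, ha, b, hb, c, hc, habc, rfl⟩ := (memPP H).mp hH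
    have h2 := finrank_direction_triple habc
    have hsub : ({a, b, c} : Set (Fin 3 → ℝ)) ⊆ Set.range P := by
      rw [Set.insert_subset_iff, Set.insert_subset_iff, Set.singleton_subset_iff]
      exact ⟨(hXmem a).mp ha, (hXmem b).mp hb, (hXmem c).mp hc⟩
    have hflat := isFlatOf_span P hsub ⟨a, Set.mem_insert _ _⟩
    refine ⟨⟨⟨hflat.1, hflat.2⟩, ?_⟩, h2⟩
    rw [flatRank, h2]
  have hsets : {W : AffineSubspace ℝ (Fin 3 → ℝ) | IsFlatOf P W ∧ flatRank W = 3}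
      = (PP : Set (AffineSubspace ℝ (Fin 3 → ℝ))) := by
    ext W
    simp only [Set.mem_setOf_eq, Finset.mem_coe]
    constructor
    · rintro ⟨⟨hne, hspan⟩, hrank⟩
      have hr2 : Module.finrank ℝ W.direction = 2 := by
        rw [flatRank] at hrank; omega
      have hnc : ¬ Collinear ℝ (Set.range P ∩ (W : Set (Fin 3 → ℝ))) := by
        intro hcol
        have hfd : FiniteDimensional ℝ
            (vectorSpan ℝ (Set.range P ∩ (W : Set (Fin 3 → ℝ)))) :=
          finiteDimensional_vectorSpan_of_finite ℝ ((Set.finite_range P).inter_of_left _)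
        have h1 : Module.finrank ℝ (vectorSpan ℝ (Set.range P ∩ (W : Set (Fin 3 → ℝ)))) ≤ 1 :=
          collinear_iff_finrank_le_one.mp hcol
        have h2' : vectorSpan ℝ (Set.range P ∩ (W : Set (Fin 3 → ℝ))) = W.direction := by
          conv_rhs => rw [hspan]
          rw [direction_affineSpan]
        rw [h2', hr2] at h1
        omega
      obtain ⟨a, ha, b, hb, c, hc, habc⟩ := exists_noncollinear_triple hnc
      have hle : affineSpan ℝ ({a, b, c} : Set (Fin 3 → ℝ)) ≤ W := by
        rw [affineSpan_le]
        rintro y (rfl | rfl | hy)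
        · exact ha.2
        · exact hb.2
        · rw [Set.mem_singleton_iff] at hy
          exact hy ▸ hc.2
      have heqW : affineSpan ℝ ({a, b, c} : Set (Fin 3 → ℝ)) = W :=
        flat_eq_of_le hle ((affineSpan_nonempty ℝ).mpr ⟨a, Set.mem_insert _ _⟩)
          (by rw [hr2, finrank_direction_triple habc])
      exact (memPP W).mpr ⟨a, (hXmem a).mpr ha.1, b, (hXmem b).mpr hb.1,
        c, (hXmem c).mpr hc.1, habc, heqW.symm⟩
    · intro h
      exact (hprop W h).1
  have hcard : Nat.card {W : AffineSubspace ℝ (Fin 3 → ℝ) // IsFlatOf P W ∧ flatRank W = 3}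
      = PP.card := by
    have h0 : Nat.card {W : AffineSubspace ℝ (Fin 3 → ℝ) // IsFlatOf P W ∧ flatRank W = 3}
        = Nat.card ({W : AffineSubspace ℝ (Fin 3 → ℝ) | IsFlatOf P W ∧ flatRank W = 3}) :=
      rfl
    rw [h0, Nat.card_coe_set_eq, hsets, Set.ncard_coe_finset]
  rw [hcard, ← hXcard]
  apply dbe_count X PP (fun x H => x ∈ H)
  · -- nonempty
    apply Finset.card_pos.mp
    rw [hXcard]; omega
  · -- h1 : the key inequality k(H) ≤ r(x)
    intro x hx H hH hni
    obtain ⟨a, ha, b, hb, c, hc, habc, rfl⟩ := (memPP H).mp hH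
    set H := affineSpan ℝ ({a, b, c} : Set (Fin 3 → ℝ)) with hHdef
    set T : Finset (Fin 3 → ℝ) := X.filter (fun q => q ∈ H) with hTdef
    have haH : a ∈ H := subset_affineSpan ℝ _ (Set.mem_insert _ _)
    have hbH : b ∈ H := subset_affineSpan ℝ _ (Set.mem_insert_of_mem _ (Set.mem_insert _ _))
    have hcH : c ∈ H :=
      subset_affineSpan ℝ _ (Set.mem_insert_of_mem _ (Set.mem_insert_of_mem _ rfl))
    have hTnc : ¬ Collinear ℝ (T : Set (Fin 3 → ℝ)) := by
      intro hcol
      apply habc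
      apply hcol.subset
      rintro y (rfl | rfl | hy)
      · rw [Finset.mem_coe, hTdef, Finset.mem_filter]; exact ⟨ha, haH⟩
      · rw [Finset.mem_coe, hTdef, Finset.mem_filter]; exact ⟨hb, hbH⟩
      · rw [Set.mem_singleton_iff] at hy
        subst hy
        rw [Finset.mem_coe, hTdef, Finset.mem_filter]; exact ⟨hc, hcH⟩
    have hH2 : Module.finrank ℝ H.direction = 2 := (hprop H hH).2
    have hHne : (H : Set (Fin 3 → ℝ)).Nonempty := ⟨a, haH⟩
    calc (X.filter fun x' => x' ∈ H).card = T.card := rfl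
      _ ≤ (linesOf T).card := dBE hTnc
      _ ≤ (PP.filter fun y' => x ∈ y').card := by
          apply Finset.card_le_card_of_injOn
            (fun L : AffineSubspace ℝ (Fin 3 → ℝ) => affineSpan ℝ (insert x (L : Set (Fin 3 → ℝ))))
          · -- maps into
            intro L hL
            obtain ⟨p, hp, q, hq, hpq, rfl⟩ := mem_linesOf.mp hL
            rw [hTdef, Finset.mem_filter] at hp hq
            have hxpq : x ∉ affineSpan ℝ ({p, q} : Set (Fin 3 → ℝ)) := by
              intro hmem
              apply hni
              have hle : affineSpan ℝ ({p, q} : Set (Fin 3 → ℝ)) ≤ H := by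
                rw [affineSpan_le]
                rintro y (rfl | hy)
                · exact hp.2
                · rw [Set.mem_singleton_iff] at hy; exact hy ▸ hq.2
              exact hle hmem
            have hncol : ¬ Collinear ℝ ({x, p, q} : Set (Fin 3 → ℝ)) :=
              not_collinear_of_not_mem_pair hpq hxpq
            rw [Finset.mem_coe, Finset.mem_filter]
            constructor
            · apply (memPP _).mpr
              exact ⟨x, hx, p, hp.1, q, hq.1, hncol, by beta_reduce; rw [affineSpan_insert_coe]⟩
            · exact subset_affineSpan ℝ _ (Set.mem_insert _ _)
          · -- injective
            intro L hL L' hL' heq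
            by_contra hne
            rw [Finset.mem_coe] at hL hL'
            change affineSpan ℝ (insert x (L : Set (Fin 3 → ℝ)))
              = affineSpan ℝ (insert x (L' : Set (Fin 3 → ℝ))) at heq
            obtain ⟨p, hp, q, hq, hpq, rfl⟩ := mem_linesOf.mp hL
            obtain ⟨p', hp', q', hq', hpq', rfl⟩ := mem_linesOf.mp hL'
            rw [hTdef, Finset.mem_filter] at hp hq hp' hq'
            have hLH : affineSpan ℝ ({p, q} : Set (Fin 3 → ℝ)) ≤ H := by
              rw [affineSpan_le]
              rintro y (rfl | hy)
              · exact hp.2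
              · rw [Set.mem_singleton_iff] at hy; exact hy ▸ hq.2
            have hL'H : affineSpan ℝ ({p', q'} : Set (Fin 3 → ℝ)) ≤ H := by
              rw [affineSpan_le]
              rintro y (rfl | hy)
              · exact hp'.2
              · rw [Set.mem_singleton_iff] at hy; exact hy ▸ hq'.2
            by_cases hss : (affineSpan ℝ ({p', q'} : Set (Fin 3 → ℝ)) : Set (Fin 3 → ℝ))
                ⊆ (affineSpan ℝ ({p, q} : Set (Fin 3 → ℝ)) : Set (Fin 3 → ℝ))
            · apply hne
              have hle' : affineSpan ℝ ({p', q'} : Set (Fin 3 → ℝ))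
                  ≤ affineSpan ℝ ({p, q} : Set (Fin 3 → ℝ)) := hss
              have := flat_eq_of_le hle' ((affineSpan_nonempty ℝ).mpr ⟨p', Set.mem_insert _ _⟩)
                (by rw [finrank_direction_pair hpq, finrank_direction_pair hpq'])
              exact this.symm
            · obtain ⟨cpt, hcpt', hcptL⟩ := Set.not_subset.mp hss
              have hcptH : cpt ∈ H := hL'H hcpt'
              have hcptnc : ¬ Collinear ℝ ({cpt, p, q} : Set (Fin 3 → ℝ)) :=
                not_collinear_of_not_mem_pair hpq hcptL
              set W := affineSpan ℝ
                (insert cpt (affineSpan ℝ ({p, q} : Set (Fin 3 → ℝ)) : Set (Fin 3 → ℝ)))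
                with hWdef
              have hWtriple : W = affineSpan ℝ ({cpt, p, q} : Set (Fin 3 → ℝ)) := by
                rw [hWdef, affineSpan_insert_coe]
              have hWH : W ≤ H := by
                rw [hWdef, affineSpan_le]
                apply Set.insert_subset hcptH
                intro y hy
                exact hLH hy
              have hW2 : Module.finrank ℝ W.direction = 2 := by
                rw [hWtriple]
                exact finrank_direction_triple hcptnc
              have hWeqH : W = H :=
                flat_eq_of_le hWH
                  (by rw [hWdef]
                      exact (affineSpan_nonempty ℝ).mpr ⟨cpt, Set.mem_insert _ _⟩)
                  (by rw [hW2, hH2])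
              -- the common plane through x
              set Pi := affineSpan ℝ
                (insert x (affineSpan ℝ ({p, q} : Set (Fin 3 → ℝ)) : Set (Fin 3 → ℝ)))
                with hPidef
              have hPitriple : Pi = affineSpan ℝ ({x, p, q} : Set (Fin 3 → ℝ)) := by
                rw [hPidef, affineSpan_insert_coe]
              have hxpq : x ∉ affineSpan ℝ ({p, q} : Set (Fin 3 → ℝ)) := fun hmem =>
                hni (hLH hmem)
              have hPi2 : Module.finrank ℝ Pi.direction = 2 := by
                rw [hPitriple]
                exact finrank_direction_triple (not_collinear_of_not_mem_pair hpq hxpq)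
              have hWPi : W ≤ Pi := by
                rw [hWdef, affineSpan_le]
                apply Set.insert_subset
                · have hcptPi : cpt ∈ affineSpan ℝ
                      (insert x (affineSpan ℝ ({p', q'} : Set (Fin 3 → ℝ)) : Set (Fin 3 → ℝ))) :=
                    subset_affineSpan ℝ _ (Set.mem_insert_of_mem _ hcpt')
                  show cpt ∈ (Pi : Set (Fin 3 → ℝ))
                  rw [heq]
                  exact hcptPi
                · intro y hy
                  exact subset_affineSpan ℝ _ (Set.mem_insert_of_mem _ hy)
              have hHPi : H = Pi :=
                flat_eq_of_le (hWeqH ▸ hWPi) hHne (by rw [hH2, hPi2])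
              apply hni
              rw [hHPi, hPidef]
              exact subset_affineSpan ℝ _ (Set.mem_insert _ _)
  · -- h2 : every point lies on a determined plane
    intro x hx
    have hncolS : ¬ Collinear ℝ (Set.range P) := fun h => hplane h.coplanar
    obtain ⟨q, hq, r, hr, h⟩ := exists_noncollinear_with hncolS x
    refine ⟨affineSpan ℝ ({x, q, r} : Set (Fin 3 → ℝ)), ?_⟩
    rw [Finset.mem_filter]
    exact ⟨(memPP _).mpr ⟨x, hx, q, (hXmem q).mpr hq, r, (hXmem r).mpr hr, h, rfl⟩,
      subset_affineSpan ℝ _ (Set.mem_insert _ _)⟩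
  · -- h3 : some determined plane avoids each point
    intro x _
    obtain ⟨a, ha, b, hb, c, hc, habc, hxnot⟩ := exists_plane_avoiding hplane x
    refine ⟨affineSpan ℝ ({a, b, c} : Set (Fin 3 → ℝ)), ?_⟩
    rw [Finset.mem_filter]
    exact ⟨(memPP _).mpr ⟨a, (hXmem a).mpr ha, b, (hXmem b).mpr hb, c, (hXmem c).mpr hc,
      habc, rfl⟩, hxnot⟩
  · -- h4 : some point off each determined plane
    intro H hH
    by_contra hcon
    push_neg at hcon
    simp only [Finset.not_nonempty_iff_eq_empty, Finset.filter_eq_empty_iff, not_not] at hcon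
    apply hplane
    apply coplanar_of_subset_plane (H := H) ?_ (le_of_eq (hprop H hH).2)
    intro y hy
    exact hcon ((hXmem y).mpr hy)
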